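/- There exists a constant C > 0 depending only on M, M′, ā and T such that the following holds. On the Shishkin mesh, let φ, ψ, g : [0,T] → ℝ be measurable with |φ(ξ)| ≤ M′, 0 ≤ ψ(ξ) ≤ 1, and |g(ξ)| ≤ M(1 + ε⁻¹ e^{−ā ξ/ε}) for all ξ ∈ [0,T]. Then for every index i with 1 ≤ i ≤ N − 1: |ħ_i⁻¹ ∫_{ξ_{i−1}}^{ξ_{i+1}} (ξ − ξ_i)(ξ − ξ_{i+1}) φ(ξ) g(ξ) ψ(ξ) dξ| ≤ C N⁻² ln N. -/

import Mathlib

/-- Shishkin transition point `ρ = min(T/2, ā⁻¹ ε ln N)`. -/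
noncomputable def sRho (T abar ε : ℝ) (N : ℕ) : ℝ :=
  min (T / 2) (abar⁻¹ * ε * Real.log N)

/-- Fine step size `h⁽¹⁾ = 2ρ/N`. -/
noncomputable def sH1 (T abar ε : ℝ) (N : ℕ) : ℝ := 2 * sRho T abar ε N / N

/-- Coarse step size `h⁽²⁾ = 2(T−ρ)/N`. -/
noncomputable def sH2 (T abar ε : ℝ) (N : ℕ) : ℝ :=
  2 * (T - sRho T abar ε N) / N

/-- Shishkin mesh points `ξ_i`. -/
noncomputable def sXi (T abar ε : ℝ) (N i : ℕ) : ℝ :=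
  if i ≤ N / 2 then (i : ℝ) * sH1 T abar ε N
  else sRho T abar ε N + ((i : ℝ) - (N : ℝ) / 2) * sH2 T abar ε N

lemma shk_half {N : ℕ} (hNe : Even N) : ((N / 2 : ℕ) : ℝ) = (N : ℝ) / 2 := by
  obtain ⟨k, rfl⟩ := hNe
  have h : (k + k) / 2 = k := by omega
  rw [h]; push_cast; ring

lemma shk_step (T abar ε : ℝ) {N : ℕ} (hN0 : N ≠ 0) (hNe : Even N) (j : ℕ) :
    sXi T abar ε N (j + 1) =
      sXi T abar ε N j + (if j + 1 ≤ N / 2 then sH1 T abar ε N else sH2 T abar ε N) := by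
  have hhalf := shk_half hNe
  have hNR : (N : ℝ) ≠ 0 := Nat.cast_ne_zero.2 hN0
  by_cases h1 : j + 1 ≤ N / 2
  · have h0 : j ≤ N / 2 := by omega
    simp only [sXi, if_pos h1, if_pos h0]
    push_cast; ring
  · by_cases h0 : j ≤ N / 2
    · have hj : j = N / 2 := by omega
      subst hj
      simp only [sXi, if_pos h0, if_neg h1]
      push_cast [hhalf]
      simp only [sH1]
      field_simp
      ring
    · simp only [sXi, if_neg h0, if_neg h1]
      push_cast; ring

lemma shk_mem (T abar ε : ℝ) (habar : 0 < abar) (hT : 0 < T) (hε : 0 < ε)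
    {N : ℕ} (hN : 4 ≤ N) {j : ℕ} (hNe : Even N) (hj : j ≤ N) :
    0 ≤ sXi T abar ε N j ∧ sXi T abar ε N j ≤ T := by
  have hhalf := shk_half hNe
  have hN0 : (N : ℝ) ≠ 0 := by positivity
  have hNpos : (0:ℝ) < N := by positivity
  have hlog : 0 ≤ Real.log N := Real.log_nonneg (by exact_mod_cast Nat.one_le_iff_ne_zero.2 (by omega))
  have hρ0 : 0 ≤ sRho T abar ε N := le_min (by positivity) (by positivity)
  have hρT : sRho T abar ε N ≤ T / 2 := min_le_left _ _
  have hh1 : 0 ≤ sH1 T abar ε N := by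
    unfold sH1; positivity
  have hh2 : 0 ≤ sH2 T abar ε N := by
    unfold sH2
    apply div_nonneg _ hNpos.le
    linarith
  have hNh1 : ((N:ℝ) / 2) * sH1 T abar ε N = sRho T abar ε N := by
    unfold sH1; field_simp
  have hNh2 : ((N:ℝ) / 2) * sH2 T abar ε N = T - sRho T abar ε N := by
    unfold sH2; field_simp
  by_cases hb : j ≤ N / 2
  · simp only [sXi, if_pos hb]
    constructor
    · positivity
    · have hjr : (j : ℝ) ≤ (N : ℝ) / 2 := by
        rw [← hhalf]; exact_mod_cast hb
      have : (j : ℝ) * sH1 T abar ε N ≤ ((N:ℝ)/2) * sH1 T abar ε N :=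
        mul_le_mul_of_nonneg_right hjr hh1
      linarith
  · simp only [sXi, if_neg hb]
    have hjr : (N : ℝ) / 2 ≤ (j : ℝ) := by
      rw [← hhalf]; exact_mod_cast Nat.le_of_lt (by omega)
    constructor
    · have : 0 ≤ ((j:ℝ) - (N:ℝ)/2) * sH2 T abar ε N :=
        mul_nonneg (by linarith) hh2
      linarith
    · have hjN : (j : ℝ) ≤ (N : ℝ) := by exact_mod_cast hj
      have : ((j:ℝ) - (N:ℝ)/2) * sH2 T abar ε N ≤ ((N:ℝ)/2) * sH2 T abar ε N :=
        mul_le_mul_of_nonneg_right (by linarith) hh2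
      linarith

lemma shk_exp_int {ε abar : ℝ} (hε : 0 < ε) (habar : 0 < abar) (a c : ℝ) :
    ∫ t in a..c, Real.exp (-(abar * t) / ε)
      = (ε / abar) * (Real.exp (-(abar * a) / ε) - Real.exp (-(abar * c) / ε)) := by
  have hD : ∀ x : ℝ, HasDerivAt (fun y => -(ε / abar) * Real.exp (-(abar * y) / ε))
      (Real.exp (-(abar * x) / ε)) x := by
    intro x
    have h1 : HasDerivAt (fun y : ℝ => -(abar * y) / ε) (-abar / ε) x := by
      have h0 : HasDerivAt (fun y : ℝ => (-abar / ε) * y) (-abar / ε) x := by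
        simpa using (hasDerivAt_id x).const_mul (-abar / ε)
      have he : (fun y : ℝ => -(abar * y) / ε) = fun y : ℝ => (-abar / ε) * y := by
        funext y; ring
      rw [he]; exact h0
    have h2 := (h1.exp).const_mul (-(ε / abar))
    have key : Real.exp (-(abar * x) / ε)
        = -(ε / abar) * (Real.exp (-(abar * x) / ε) * (-abar / ε)) := by
      have := hε.ne'
      have := habar.ne'
      field_simp
    exact h2.congr_deriv key.symm
  rw [intervalIntegral.integral_eq_sub_of_hasDerivAt (fun x _ => hD x)
      ((Real.continuous_exp.comp (by fun_prop)).intervalIntegrable _ _)]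
  ring

set_option maxHeartbeats 1000000 in
/-- uniform `O(N⁻² ln N)` bound for weighted local quadrature
remainders on the Shishkin mesh with a layer-type factor `g`. -/
theorem weighted_remainder_layer_bound
    (M M' abar T : ℝ) (hM : 0 < M) (hM' : 0 < M') (habar : 0 < abar) (hT : 0 < T) :
    ∃ C : ℝ, 0 < C ∧ ∀ (ε : ℝ) (N : ℕ), 0 < ε → ε ≤ 1 → 4 ≤ N → Even N →
      ∀ φ ψ g : ℝ → ℝ, Measurable φ → Measurable ψ → Measurable g →
        (∀ ξ ∈ Set.Icc 0 T, |φ ξ| ≤ M') →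
        (∀ ξ ∈ Set.Icc 0 T, 0 ≤ ψ ξ ∧ ψ ξ ≤ 1) →
        (∀ ξ ∈ Set.Icc 0 T, |g ξ| ≤ M * (1 + ε⁻¹ * Real.exp (-(abar * ξ) / ε))) →
        ∀ i : ℕ, 1 ≤ i → i ≤ N - 1 →
          |((sXi T abar ε N (i + 1) - sXi T abar ε N (i - 1)) / 2)⁻¹ *
              ∫ ξ in sXi T abar ε N (i - 1)..sXi T abar ε N (i + 1),
                (ξ - sXi T abar ε N i) * (ξ - sXi T abar ε N (i + 1)) * φ ξ * g ξ * ψ ξ|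
            ≤ C * ((N : ℝ) ^ 2)⁻¹ * Real.log N := by
  set K1 : ℝ := 32 * M' * M * T ^ 2 + 64 * M' * M * T / abar with hK1def
  set K2 : ℝ := 8 * M' * M * T ^ 2 + 16 * M' * M * T / abar with hK2def
  set K3 : ℝ := 32 * M' * M * T ^ 2 + 72 * M' * M * T / abar with hK3def
  have hK1 : 0 ≤ K1 := by rw [hK1def]; positivity
  have hK2 : 0 ≤ K2 := by rw [hK2def]; positivity
  have hK3 : 0 ≤ K3 := by rw [hK3def]; positivity
  refine ⟨K1 + K2 + K3 + 1, by linarith, ?_⟩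
  intro ε N hε hε1 hN hNe φ ψ g hφm hψm hgm hφ hψ hg i hi1 hiN
  have hN0 : N ≠ 0 := by omega
  have hNR : (4:ℝ) ≤ (N:ℝ) := by exact_mod_cast hN
  have hNpos : (0:ℝ) < N := by linarith
  have hlog1 : 1 ≤ Real.log N := by
    rw [Real.le_log_iff_exp_le hNpos]
    calc Real.exp 1 ≤ 2.7182818286 := Real.exp_one_lt_d9.le
      _ ≤ 4 := by norm_num
      _ ≤ (N:ℝ) := hNR
  have hlogpos : 0 < Real.log N := lt_of_lt_of_le one_pos hlog1
  have hρpos : 0 < sRho T abar ε N := lt_min (by positivity) (by positivity)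
  have hρT : sRho T abar ε N ≤ T / 2 := min_le_left _ _
  have hh1pos : 0 < sH1 T abar ε N := by
    unfold sH1; exact div_pos (by linarith) hNpos
  have hh2pos : 0 < sH2 T abar ε N := by
    unfold sH2; exact div_pos (by linarith) hNpos
  have hh12 : sH1 T abar ε N ≤ sH2 T abar ε N := by
    unfold sH1 sH2
    apply div_le_div_of_nonneg_right ?_ hNpos.le <;> try linarith
  have hh2T : sH2 T abar ε N ≤ 2 * T / N := by
    unfold sH2
    apply div_le_div_of_nonneg_right ?_ hNpos.le <;> try linarith
  -- mesh point relations
  have hi' : i - 1 + 1 = i := by omega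
  have hstep1 := shk_step T abar ε hN0 hNe (i - 1)
  rw [hi'] at hstep1
  have hstep2 := shk_step T abar ε hN0 hNe i
  have hmemA := shk_mem T abar ε habar hT hε hN hNe (show i - 1 ≤ N by omega)
  have hmemC := shk_mem T abar ε habar hT hε hN hNe (show i + 1 ≤ N by omega)
  set a := sXi T abar ε N (i - 1) with hadef
  set b := sXi T abar ε N i with hbdef
  set c := sXi T abar ε N (i + 1) with hcdef
  have hba_ge : sH1 T abar ε N ≤ b - a := by
    rw [hstep1]; split_ifs <;> linarith
  have hba_le : b - a ≤ sH2 T abar ε N := by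
    rw [hstep1]; split_ifs <;> linarith
  have hcb_ge : sH1 T abar ε N ≤ c - b := by
    rw [hstep2]; split_ifs <;> linarith
  have hcb_le : c - b ≤ sH2 T abar ε N := by
    rw [hstep2]; split_ifs <;> linarith
  have hd_pos : 0 < c - a := by linarith
  have hac : a ≤ c := by linarith
  have hd_le : c - a ≤ 4 * T / N := by
    have h1 : b - a ≤ 2 * T / N := le_trans hba_le hh2T
    have h2 : c - b ≤ 2 * T / N := le_trans hcb_le hh2T
    have h3 : 2 * T / (N:ℝ) + 2 * T / N = 4 * T / N := by ring
    linarith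
  have ha0 : 0 ≤ a := hmemA.1
  have hcT : c ≤ T := hmemC.2
  -- the layer integral
  set E := ∫ t in a..c, Real.exp (-(abar * t) / ε) with hEdef
  have hEeq : E = (ε / abar) * (Real.exp (-(abar * a) / ε) - Real.exp (-(abar * c) / ε)) :=
    shk_exp_int hε habar a c
  have hexp_ac : Real.exp (-(abar * c) / ε) ≤ Real.exp (-(abar * a) / ε) := by
    apply Real.exp_le_exp.2
    have h1 : abar * a ≤ abar * c := mul_le_mul_of_nonneg_left hac habar.le
    apply div_le_div_of_nonneg_right ?_ hε.le
    linarith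
  have hEnn : 0 ≤ E := by
    rw [hEeq]
    exact mul_nonneg (by positivity) (by linarith)
  have hE1 : E ≤ c - a := by
    have hb1 : ∀ x ∈ Set.uIoc a c, ‖Real.exp (-(abar * x) / ε)‖ ≤ 1 := by
      intro x hx
      rw [Set.uIoc_of_le hac] at hx
      rw [Real.norm_eq_abs, abs_of_pos (Real.exp_pos _)]
      rw [Real.exp_le_one_iff]
      have hx0 : 0 ≤ x := le_trans ha0 hx.1.le
      have h1 : 0 ≤ abar * x / ε := by positivity
      have h2 : -(abar * x) / ε = -(abar * x / ε) := by ring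
      rw [h2]; linarith
    have h3 := intervalIntegral.norm_integral_le_of_norm_le_const hb1
    rw [Real.norm_eq_abs, abs_of_nonneg hEnn,
      abs_of_nonneg (by linarith : (0:ℝ) ≤ c - a)] at h3
    linarith
  have hE2 : E ≤ (ε / abar) * Real.exp (-(abar * a) / ε) := by
    rw [hEeq]
    apply mul_le_mul_of_nonneg_left ?_ (by positivity : (0:ℝ) ≤ ε / abar)
    have := (Real.exp_pos (-(abar * c) / ε)).le
    linarith
  -- bound for the integrand
  set G : ℝ → ℝ := fun t => M' * M * (c - a) ^ 2 * (1 + ε⁻¹ * Real.exp (-(abar * t) / ε))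
    with hGdef
  have hGcont : Continuous G := by rw [hGdef]; fun_prop
  have hbnd : ∀ t ∈ Set.uIoc a c, ‖(t - b) * (t - c) * φ t * g t * ψ t‖ ≤ G t := by
    intro t ht
    rw [Set.uIoc_of_le hac] at ht
    have htIcc : t ∈ Set.Icc (0:ℝ) T := ⟨le_trans ha0 ht.1.le, le_trans ht.2 hcT⟩
    have h1 : |t - b| ≤ c - a := by
      rw [abs_le]
      have := ht.1.le
      have := ht.2
      constructor <;> linarith
    have h2 : |t - c| ≤ c - a := by
      rw [abs_le]
      have := ht.1.le
      have := ht.2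
      constructor <;> linarith
    have h3 : |φ t| ≤ M' := hφ t htIcc
    have h4 : |g t| ≤ M * (1 + ε⁻¹ * Real.exp (-(abar * t) / ε)) := hg t htIcc
    have h5 : |ψ t| ≤ 1 := by
      rcases hψ t htIcc with ⟨hl, hr⟩
      rw [abs_le]; constructor <;> linarith
    rw [Real.norm_eq_abs]
    calc |(t - b) * (t - c) * φ t * g t * ψ t|
        = |t - b| * |t - c| * |φ t| * |g t| * |ψ t| := by
          rw [abs_mul, abs_mul, abs_mul, abs_mul]
      _ ≤ (c - a) * (c - a) * M' * (M * (1 + ε⁻¹ * Real.exp (-(abar * t) / ε))) * 1 := by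
          apply mul_le_mul _ h5 (abs_nonneg _)
          · positivity
          apply mul_le_mul _ h4 (abs_nonneg _)
          · positivity
          apply mul_le_mul _ h3 (abs_nonneg _)
          · positivity
          exact mul_le_mul h1 h2 (abs_nonneg _) (by linarith)
      _ = G t := by rw [hGdef]; ring
  have hIle : |∫ ξ in a..c, (ξ - b) * (ξ - c) * φ ξ * g ξ * ψ ξ|
      ≤ |∫ t in a..c, G t| := by
    rw [← Real.norm_eq_abs]
    apply intervalIntegral.norm_integral_le_abs_of_norm_le ?_
      (hGcont.intervalIntegrable _ _)
    filter_upwards [MeasureTheory.ae_restrict_mem measurableSet_uIoc] with t ht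
    exact hbnd t ht
  have hGeq : ∫ t in a..c, G t = M' * M * (c - a) ^ 2 * ((c - a) + ε⁻¹ * E) := by
    rw [hGdef]
    rw [intervalIntegral.integral_const_mul]
    rw [intervalIntegral.integral_add intervalIntegrable_const
      ((show Continuous fun t : ℝ => ε⁻¹ * Real.exp (-(abar * t) / ε) by fun_prop).intervalIntegrable _ _)]
    rw [intervalIntegral.integral_const_mul, intervalIntegral.integral_const]
    rw [← hEdef]
    simp [smul_eq_mul]
  have hεE : 0 ≤ ε⁻¹ * E := mul_nonneg (by positivity) hEnn
  have hGnn : 0 ≤ ∫ t in a..c, G t := by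
    rw [hGeq]
    exact mul_nonneg (by positivity) (by linarith)
  have hmain : |((c - a) / 2)⁻¹ * ∫ ξ in a..c, (ξ - b) * (ξ - c) * φ ξ * g ξ * ψ ξ|
      ≤ 2 * M' * M * (c - a) * ((c - a) + ε⁻¹ * E) := by
    have hinv : (0:ℝ) < ((c - a) / 2)⁻¹ := by positivity
    rw [abs_mul, abs_of_pos hinv]
    calc ((c - a) / 2)⁻¹ * |∫ ξ in a..c, (ξ - b) * (ξ - c) * φ ξ * g ξ * ψ ξ|
        ≤ ((c - a) / 2)⁻¹ * (M' * M * (c - a) ^ 2 * ((c - a) + ε⁻¹ * E)) := by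
          apply mul_le_mul_of_nonneg_left _ hinv.le
          calc |∫ ξ in a..c, (ξ - b) * (ξ - c) * φ ξ * g ξ * ψ ξ|
              ≤ |∫ t in a..c, G t| := hIle
            _ = ∫ t in a..c, G t := abs_of_nonneg hGnn
            _ = M' * M * (c - a) ^ 2 * ((c - a) + ε⁻¹ * E) := hGeq
      _ = 2 * M' * M * (c - a) * ((c - a) + ε⁻¹ * E) := by
          field_simp
  refine le_trans hmain ?_
  have hq : (0:ℝ) ≤ ((N:ℝ) ^ 2)⁻¹ * Real.log N := by positivity
  -- case analysis
  by_cases hcase : T / 2 ≤ abar⁻¹ * ε * Real.log N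
  · -- ε is large: ε⁻¹ ≤ 2 log N / (abar T)
    have h3 : abar * T / 2 ≤ ε * Real.log N := by
      have h := mul_le_mul_of_nonneg_left hcase habar.le
      have he : abar * (abar⁻¹ * ε * Real.log N) = ε * Real.log N := by
        field_simp
      rw [he] at h
      linarith
    have hεinv : ε⁻¹ ≤ 2 * Real.log N / (abar * T) := by
      rw [inv_eq_one_div, div_le_div_iff₀ hε (by positivity)]
      linarith
    have hY : ε⁻¹ * E ≤ 2 * Real.log N / (abar * T) * (4 * T / N) := by
      calc ε⁻¹ * E ≤ ε⁻¹ * (c - a) := mul_le_mul_of_nonneg_left hE1 (by positivity)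
        _ ≤ 2 * Real.log N / (abar * T) * (4 * T / N) :=
            mul_le_mul hεinv hd_le hd_pos.le (by positivity)
    calc 2 * M' * M * (c - a) * ((c - a) + ε⁻¹ * E)
        ≤ 2 * M' * M * (4 * T / N) * ((4 * T / N) + 2 * Real.log N / (abar * T) * (4 * T / N)) := by
          apply mul_le_mul
          · exact mul_le_mul_of_nonneg_left hd_le (by positivity)
          · exact add_le_add hd_le hY
          · linarith
          · positivity
      _ = 32 * M' * M * T ^ 2 * ((N:ℝ) ^ 2)⁻¹
            + 64 * M' * M * T / abar * (((N:ℝ) ^ 2)⁻¹ * Real.log N) := by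
          field_simp
          ring
      _ ≤ (K1 + K2 + K3 + 1) * ((N:ℝ) ^ 2)⁻¹ * Real.log N := by
          have ha1 : 32 * M' * M * T ^ 2 * ((N:ℝ) ^ 2)⁻¹
              ≤ 32 * M' * M * T ^ 2 * (((N:ℝ) ^ 2)⁻¹ * Real.log N) := by
            rw [← mul_assoc]
            exact le_mul_of_one_le_right (by positivity) hlog1
          have ha3 : 32 * M' * M * T ^ 2 * (((N:ℝ) ^ 2)⁻¹ * Real.log N)
              + 64 * M' * M * T / abar * (((N:ℝ) ^ 2)⁻¹ * Real.log N)
              = K1 * (((N:ℝ) ^ 2)⁻¹ * Real.log N) := by rw [hK1def]; ring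
          have ha4 : K1 * (((N:ℝ) ^ 2)⁻¹ * Real.log N)
              ≤ (K1 + K2 + K3 + 1) * (((N:ℝ) ^ 2)⁻¹ * Real.log N) :=
            mul_le_mul_of_nonneg_right (by linarith) hq
          rw [mul_assoc]
          linarith
  · have hρ_eq : sRho T abar ε N = abar⁻¹ * ε * Real.log N :=
      min_eq_right (le_of_not_ge hcase)
    have hcase' : abar⁻¹ * ε * Real.log N ≤ T / 2 := le_of_not_ge hcase
    by_cases h2a : i + 1 ≤ N / 2
    · -- fine region
      have e1 : b - a = sH1 T abar ε N := by
        rw [hstep1, if_pos (by omega : i ≤ N / 2)]; ring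
      have e2 : c - b = sH1 T abar ε N := by
        rw [hstep2, if_pos h2a]; ring
      have hd_eq : c - a = 4 * (abar⁻¹ * ε * Real.log N) / N := by
        have h : c - a = 2 * sH1 T abar ε N := by linarith
        rw [h]
        unfold sH1
        rw [hρ_eq]
        ring
      have hd_le2 : c - a ≤ 2 * T / N := by
        rw [hd_eq]
        calc 4 * (abar⁻¹ * ε * Real.log N) / (N:ℝ) ≤ 4 * (T / 2) / N := by
              apply div_le_div_of_nonneg_right ?_ hNpos.le
              linarith
          _ = 2 * T / N := by ring
      have hY : ε⁻¹ * E ≤ 4 * Real.log N / (abar * N) := by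
        calc ε⁻¹ * E ≤ ε⁻¹ * (c - a) := mul_le_mul_of_nonneg_left hE1 (by positivity)
          _ = 4 * Real.log N / (abar * N) := by
              rw [hd_eq]
              field_simp
      calc 2 * M' * M * (c - a) * ((c - a) + ε⁻¹ * E)
          ≤ 2 * M' * M * (2 * T / N) * ((2 * T / N) + 4 * Real.log N / (abar * N)) := by
            apply mul_le_mul
            · exact mul_le_mul_of_nonneg_left hd_le2 (by positivity)
            · exact add_le_add hd_le2 hY
            · linarith
            · positivity
        _ = 8 * M' * M * T ^ 2 * ((N:ℝ) ^ 2)⁻¹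
              + 16 * M' * M * T / abar * (((N:ℝ) ^ 2)⁻¹ * Real.log N) := by
            field_simp
            ring
        _ ≤ (K1 + K2 + K3 + 1) * ((N:ℝ) ^ 2)⁻¹ * Real.log N := by
            have ha1 : 8 * M' * M * T ^ 2 * ((N:ℝ) ^ 2)⁻¹
                ≤ 8 * M' * M * T ^ 2 * (((N:ℝ) ^ 2)⁻¹ * Real.log N) := by
              rw [← mul_assoc]
              exact le_mul_of_one_le_right (by positivity) hlog1
            have ha3 : 8 * M' * M * T ^ 2 * (((N:ℝ) ^ 2)⁻¹ * Real.log N)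
                + 16 * M' * M * T / abar * (((N:ℝ) ^ 2)⁻¹ * Real.log N)
                = K2 * (((N:ℝ) ^ 2)⁻¹ * Real.log N) := by rw [hK2def]; ring
            have ha4 : K2 * (((N:ℝ) ^ 2)⁻¹ * Real.log N)
                ≤ (K1 + K2 + K3 + 1) * (((N:ℝ) ^ 2)⁻¹ * Real.log N) :=
              mul_le_mul_of_nonneg_right (by linarith) hq
            rw [mul_assoc]
            linarith
    · -- coarse region : N/2 ≤ i
      have hhalfc := shk_half hNe
      have hNh1 : ((N:ℝ) / 2) * sH1 T abar ε N = sRho T abar ε N := by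
        unfold sH1; field_simp
      have ha_ge : sRho T abar ε N - sH1 T abar ε N ≤ a := by
        by_cases hbr : i - 1 ≤ N / 2
        · have haf : a = ((i - 1 : ℕ) : ℝ) * sH1 T abar ε N := by
            rw [hadef]; simp only [sXi, if_pos hbr]
          have hge : ((N:ℝ) / 2) - 1 ≤ ((i - 1 : ℕ) : ℝ) := by
            have h1 : N / 2 - 1 ≤ i - 1 := by omega
            have h2 : ((N / 2 - 1 : ℕ) : ℝ) ≤ ((i - 1 : ℕ) : ℝ) := by exact_mod_cast h1
            have h01 : (1:ℕ) ≤ N / 2 := by omega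
            have h3 : ((N / 2 - 1 : ℕ) : ℝ) = ((N / 2 : ℕ) : ℝ) - 1 := by
              push_cast [Nat.cast_sub h01]
              ring
            rw [h3, hhalfc] at h2
            exact h2
          have h4 := mul_le_mul_of_nonneg_right hge hh1pos.le
          rw [haf]
          have h5 : ((N:ℝ)/2 - 1) * sH1 T abar ε N
              = ((N:ℝ)/2) * sH1 T abar ε N - sH1 T abar ε N := by ring
          rw [h5, hNh1] at h4
          linarith
        · have haf : a = sRho T abar ε N + (((i - 1 : ℕ) : ℝ) - (N:ℝ)/2) * sH2 T abar ε N := by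
            rw [hadef]; simp only [sXi, if_neg hbr]
          have hge : (N:ℝ) / 2 ≤ ((i - 1 : ℕ) : ℝ) := by
            have h1 : N / 2 ≤ i - 1 := by omega
            have h2 : ((N / 2 : ℕ) : ℝ) ≤ ((i - 1 : ℕ) : ℝ) := by exact_mod_cast h1
            rwa [hhalfc] at h2
          have h4 := mul_nonneg (by linarith : (0:ℝ) ≤ ((i - 1 : ℕ) : ℝ) - (N:ℝ)/2) hh2pos.le
          rw [haf]
          linarith
      have hexp : Real.exp (-(abar * a) / ε) ≤ 9 / N := by
        have hstep : -(abar * a) / ε ≤ -(abar * (sRho T abar ε N - sH1 T abar ε N)) / ε := by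
          apply div_le_div_of_nonneg_right ?_ hε.le
          have h1 := mul_le_mul_of_nonneg_left ha_ge habar.le
          linarith
        have hsplit : -(abar * (sRho T abar ε N - sH1 T abar ε N)) / ε
            = -(abar * sRho T abar ε N) / ε + abar * sH1 T abar ε N / ε := by
          ring
        have hr1 : -(abar * sRho T abar ε N) / ε = -Real.log N := by
          rw [hρ_eq]
          field_simp
        have hr2 : abar * sH1 T abar ε N / ε = 2 * Real.log N / N := by
          unfold sH1
          rw [hρ_eq]
          field_simp
        have hr3 : 2 * Real.log N / (N:ℝ) ≤ 2 := by
          rw [div_le_iff₀ hNpos]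
          have := Real.log_le_sub_one_of_pos hNpos
          linarith
        have hexp2 : Real.exp 2 ≤ 9 := by
          have h := Real.exp_one_lt_d9.le
          have h1 : Real.exp 1 ≤ 3 := le_trans h (by norm_num)
          have h2 : Real.exp 2 = Real.exp 1 * Real.exp 1 := by
            rw [← Real.exp_add]; norm_num
          rw [h2]
          calc Real.exp 1 * Real.exp 1 ≤ 3 * 3 :=
            mul_le_mul h1 h1 (Real.exp_pos 1).le (by norm_num)
          _ = 9 := by norm_num
        calc Real.exp (-(abar * a) / ε)
            ≤ Real.exp (-Real.log N + 2 * Real.log N / N) := by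
              apply Real.exp_le_exp.2
              rw [← hr1, ← hr2, ← hsplit]
              exact hstep
          _ = Real.exp (-Real.log N) * Real.exp (2 * Real.log N / N) := Real.exp_add _ _
          _ ≤ (N:ℝ)⁻¹ * 9 := by
              apply mul_le_mul
              · rw [Real.exp_neg, Real.exp_log hNpos]
              · exact le_trans (Real.exp_le_exp.2 hr3) hexp2
              · positivity
              · positivity
          _ = 9 / N := by ring
      have hY : ε⁻¹ * E ≤ 9 / (abar * N) := by
        calc ε⁻¹ * E ≤ ε⁻¹ * ((ε / abar) * Real.exp (-(abar * a) / ε)) :=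
              mul_le_mul_of_nonneg_left hE2 (by positivity)
          _ = Real.exp (-(abar * a) / ε) / abar := by
              field_simp
          _ ≤ (9 / N) / abar := div_le_div_of_nonneg_right hexp habar.le
          _ = 9 / (abar * N) := by rw [div_div, mul_comm]
      calc 2 * M' * M * (c - a) * ((c - a) + ε⁻¹ * E)
          ≤ 2 * M' * M * (4 * T / N) * ((4 * T / N) + 9 / (abar * N)) := by
            apply mul_le_mul
            · exact mul_le_mul_of_nonneg_left hd_le (by positivity)
            · exact add_le_add hd_le hY
            · linarith
            · positivity
        _ = K3 * ((N:ℝ) ^ 2)⁻¹ := by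
            rw [hK3def]
            field_simp
            ring
        _ ≤ (K1 + K2 + K3 + 1) * ((N:ℝ) ^ 2)⁻¹ * Real.log N := by
            have ha1 : K3 * ((N:ℝ) ^ 2)⁻¹ ≤ K3 * (((N:ℝ) ^ 2)⁻¹ * Real.log N) := by
              rw [← mul_assoc]
              apply le_mul_of_one_le_right (mul_nonneg hK3 (by positivity)) hlog1
            have ha4 : K3 * (((N:ℝ) ^ 2)⁻¹ * Real.log N)
                ≤ (K1 + K2 + K3 + 1) * (((N:ℝ) ^ 2)⁻¹ * Real.log N) :=
              mul_le_mul_of_nonneg_right (by linarith) hq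
            rw [mul_assoc]
            linarith
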